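/- arXiv:1011.2365 — 8 statements merged into one kernel-verified Lean document; each statement's English description precedes it below -/
import Mathlib

section
/- If a sequence of real numbers (s_k) is strongly p-Cesàro convergent to s for some p > 0 (i.e., (1/n)·∑_{k=1}^n |s_k − s|^p → 0), then (s_k) is statistically convergent to s (i.e., for every ε > 0, (1/n)·|{k ≤ n : |s_k − s| ≥ ε}| → 0). -/
open Filter

/-- If a real sequence is strongly p-Cesàro convergent to `t` for some `p > 0`,
then it is statistically convergent to `t`. -/
theorem strong_cesaro_implies_statistical (s : ℕ → ℝ) (t : ℝ) (p : ℝ) (hp : 0 < p)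
    (h : Tendsto (fun n : ℕ => (1 / (n : ℝ)) * ∑ k ∈ Finset.Icc 1 n, |s k - t| ^ p)
      atTop (nhds 0)) :
    ∀ ε > 0, Tendsto
      (fun n : ℕ =>
        (((Finset.Icc 1 n).filter (fun k => ε ≤ |s k - t|)).card : ℝ) / (n : ℝ))
      atTop (nhds 0) := by
  intro ε hε
  have hεp : 0 < ε ^ p := Real.rpow_pos_of_pos hε p
  have hg : Tendsto (fun n : ℕ => (1 / (ε ^ p)) *
      ((1 / (n : ℝ)) * ∑ k ∈ Finset.Icc 1 n, |s k - t| ^ p)) atTop (nhds 0) := by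
    simpa using h.const_mul (1 / (ε ^ p))
  refine squeeze_zero (fun n => by positivity) (fun n => ?_) hg
  rcases Nat.eq_zero_or_pos n with h0 | hn
  · simp [h0]
  have hn' : (0 : ℝ) < n := by exact_mod_cast hn
  set F := (Finset.Icc 1 n).filter (fun k => ε ≤ |s k - t|) with hF
  have key : (F.card : ℝ) * ε ^ p ≤ ∑ k ∈ Finset.Icc 1 n, |s k - t| ^ p := by
    calc (F.card : ℝ) * ε ^ p = ∑ _k ∈ F, ε ^ p := by
          rw [Finset.sum_const, nsmul_eq_mul]
      _ ≤ ∑ k ∈ F, |s k - t| ^ p :=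
          Finset.sum_le_sum fun k hk =>
            Real.rpow_le_rpow hε.le (Finset.mem_filter.mp hk).2 hp.le
      _ ≤ ∑ k ∈ Finset.Icc 1 n, |s k - t| ^ p :=
          Finset.sum_le_sum_of_subset_of_nonneg (Finset.filter_subset _ _)
            (fun k _ _ => Real.rpow_nonneg (abs_nonneg _) p)
  calc (F.card : ℝ) / n = (F.card * ε ^ p) / (ε ^ p * n) := by
        field_simp
    _ ≤ (∑ k ∈ Finset.Icc 1 n, |s k - t| ^ p) / (ε ^ p * n) := by
        gcongr
    _ = (1 / (ε ^ p)) * ((1 / (n : ℝ)) * ∑ k ∈ Finset.Icc 1 n, |s k - t| ^ p) := by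
        field_simp
end

section
/- If a bounded sequence of real numbers (s_k) is statistically convergent to s, then for every p > 0 it is strongly p-Cesàro convergent to s. -/
open Filter

/-- A bounded, statistically convergent real sequence is strongly p-Cesàro convergent
for every `p > 0`. -/
theorem statistical_implies_strong_cesaro (s : ℕ → ℝ) (t : ℝ)
    (R : ℝ) (hbdd : ∀ k, |s k| ≤ R)
    (hstat : ∀ ε > 0, Tendsto
      (fun n : ℕ =>
        (((Finset.Icc 1 n).filter (fun k => ε ≤ |s k - t|)).card : ℝ) / (n : ℝ))
      atTop (nhds 0)) :
    ∀ p : ℝ, 0 < p →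
      Tendsto (fun n : ℕ => (1 / (n : ℝ)) * ∑ k ∈ Finset.Icc 1 n, |s k - t| ^ p)
        atTop (nhds 0) := by
  intro p hp
  have hR : (0:ℝ) ≤ R := le_trans (abs_nonneg _) (hbdd 0)
  set M : ℝ := R + |t| + 1 with hMdef
  have hM0 : 0 < M := by have := abs_nonneg t; dsimp [M]; linarith
  have hMp : 0 < M ^ p := Real.rpow_pos_of_pos hM0 p
  have hbd : ∀ k, |s k - t| ≤ M := by
    intro k
    have h1 : |s k - t| ≤ |s k| + |t| := abs_sub (s k) t
    have := hbdd k
    dsimp [M]; linarith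
  rw [Metric.tendsto_atTop]
  intro δ hδ
  set ε : ℝ := (δ / 2) ^ (p⁻¹) with hεdef
  have hε : 0 < ε := Real.rpow_pos_of_pos (by linarith) _
  have hεp : ε ^ p = δ / 2 := Real.rpow_inv_rpow (by linarith) (ne_of_gt hp)
  have hfrac : 0 < δ / (2 * M ^ p) := by positivity
  obtain ⟨N, hN⟩ := eventually_atTop.mp ((hstat ε hε).eventually_lt_const hfrac)
  refine ⟨max N 1, fun n hn => ?_⟩
  have hnN : N ≤ n := le_trans (le_max_left _ _) hn
  have hn1 : 1 ≤ n := le_trans (le_max_right _ _) hn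
  have hnpos : (0:ℝ) < n := by exact_mod_cast hn1
  set A : Finset ℕ := (Finset.Icc 1 n).filter (fun k => ε ≤ |s k - t|) with hAdef
  set B : Finset ℕ := (Finset.Icc 1 n).filter (fun k => ¬ ε ≤ |s k - t|) with hBdef
  have hsumA : ∑ k ∈ A, |s k - t| ^ p ≤ (A.card : ℝ) * M ^ p := by
    have := Finset.sum_le_card_nsmul A (fun k => |s k - t| ^ p) (M ^ p)
      (fun k _ => Real.rpow_le_rpow (abs_nonneg _) (hbd k) hp.le)
    simpa [nsmul_eq_mul] using this
  have hsumB : ∑ k ∈ B, |s k - t| ^ p ≤ (n : ℝ) * ε ^ p := by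
    have h1 : ∑ k ∈ B, |s k - t| ^ p ≤ (B.card : ℝ) * ε ^ p := by
      have := Finset.sum_le_card_nsmul B (fun k => |s k - t| ^ p) (ε ^ p)
        (fun k hk => by
          have hk' : ¬ ε ≤ |s k - t| := (Finset.mem_filter.mp hk).2
          exact Real.rpow_le_rpow (abs_nonneg _) (le_of_not_ge hk') hp.le)
      simpa [nsmul_eq_mul] using this
    have hcard : (B.card : ℝ) ≤ (n : ℝ) := by
      have := Finset.card_filter_le (Finset.Icc 1 n) (fun k => ¬ ε ≤ |s k - t|)
      have hIcc : (Finset.Icc 1 n).card = n := by simp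
      exact_mod_cast hIcc ▸ this
    have hεpnn : 0 ≤ ε ^ p := le_of_lt (Real.rpow_pos_of_pos hε p)
    calc ∑ k ∈ B, |s k - t| ^ p ≤ (B.card : ℝ) * ε ^ p := h1
      _ ≤ (n : ℝ) * ε ^ p := mul_le_mul_of_nonneg_right hcard hεpnn
  have hsum : ∑ k ∈ Finset.Icc 1 n, |s k - t| ^ p
      ≤ (A.card : ℝ) * M ^ p + (n : ℝ) * ε ^ p := by
    rw [← Finset.sum_filter_add_sum_filter_not (Finset.Icc 1 n) (fun k => ε ≤ |s k - t|)]
    exact add_le_add hsumA hsumB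
  have hnonneg : 0 ≤ ∑ k ∈ Finset.Icc 1 n, |s k - t| ^ p :=
    Finset.sum_nonneg fun k _ => Real.rpow_nonneg (abs_nonneg _) p
  have hkey : (1 / (n : ℝ)) * ∑ k ∈ Finset.Icc 1 n, |s k - t| ^ p < δ := by
    have hAn : (A.card : ℝ) / n < δ / (2 * M ^ p) := hN n hnN
    calc (1 / (n : ℝ)) * ∑ k ∈ Finset.Icc 1 n, |s k - t| ^ p
        ≤ (1 / (n : ℝ)) * ((A.card : ℝ) * M ^ p + (n : ℝ) * ε ^ p) :=
          mul_le_mul_of_nonneg_left hsum (by positivity)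
      _ = ((A.card : ℝ) / n) * M ^ p + ε ^ p := by field_simp
      _ < (δ / (2 * M ^ p)) * M ^ p + δ / 2 := by
          rw [hεp]
          exact add_lt_add_left (mul_lt_mul_of_pos_right hAn hMp) _
      _ = δ := by field_simp; ring
  rw [Real.dist_eq, sub_zero, abs_of_nonneg (by positivity)]
  exact hkey
end

section
/- For a bounded sequence of real numbers and any two exponents p, q > 0, strong p-Cesàro convergence to s is equivalent to strong q-Cesàro convergence to s. -/
open Filter

lemma strong_cesaro_aux (s : ℕ → ℝ) (t : ℝ) (R : ℝ) (hbdd : ∀ k, |s k| ≤ R)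
    (p q : ℝ) (hp : 0 < p) (hq : 0 < q)
    (h : Tendsto (fun n : ℕ => (1 / (n : ℝ)) * ∑ k ∈ Finset.Icc 1 n, |s k - t| ^ p)
        atTop (nhds 0)) :
    Tendsto (fun n : ℕ => (1 / (n : ℝ)) * ∑ k ∈ Finset.Icc 1 n, |s k - t| ^ q)
        atTop (nhds 0) := by
  set M : ℝ := R + |t| + 1 with hM
  have hM0 : 0 < M := by
    have := abs_nonneg (s 0); have := hbdd 0; have := abs_nonneg t; linarith
  have hbM : ∀ k, |s k - t| ≤ M := by
    intro k
    calc |s k - t| ≤ |s k| + |t| := abs_sub _ _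
    _ ≤ M := by have := hbdd k; simp [hM]; linarith
  rw [NormedAddCommGroup.tendsto_nhds_zero] at h ⊢
  intro ε hε
  set δ : ℝ := (ε / 2) ^ (1 / q) with hδdef
  have hδ : 0 < δ := Real.rpow_pos_of_pos (by linarith) _
  have hδq : δ ^ q = ε / 2 := by
    rw [hδdef, one_div, Real.rpow_inv_rpow (by linarith) hq.ne']
  set C : ℝ := M ^ q / δ ^ p with hC
  have hC0 : 0 < C := div_pos (Real.rpow_pos_of_pos hM0 _) (Real.rpow_pos_of_pos hδ _)
  -- pointwise inequality
  have key : ∀ a : ℝ, 0 ≤ a → a ≤ M → a ^ q ≤ δ ^ q + C * a ^ p := by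
    intro a ha haM
    rcases le_or_gt a δ with hle | hlt
    · have h1 : a ^ q ≤ δ ^ q := Real.rpow_le_rpow ha hle hq.le
      have h2 : 0 ≤ C * a ^ p := mul_nonneg hC0.le (Real.rpow_nonneg ha _)
      linarith
    · have h1 : a ^ q ≤ M ^ q := Real.rpow_le_rpow ha haM hq.le
      have h2 : δ ^ p ≤ a ^ p := Real.rpow_le_rpow hδ.le hlt.le hp.le
      have h3 : M ^ q ≤ C * a ^ p := by
        rw [hC, div_mul_eq_mul_div, le_div_iff₀ (Real.rpow_pos_of_pos hδ _)]
        have : 0 ≤ M ^ q := (Real.rpow_pos_of_pos hM0 _).le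
        nlinarith
      have h4 : 0 ≤ δ ^ q := Real.rpow_nonneg hδ.le _
      linarith
  have hev := h (ε / (2 * C)) (by positivity)
  filter_upwards [hev, eventually_ge_atTop 1] with n hn hn1
  have hn0 : (0 : ℝ) < (n : ℝ) := by exact_mod_cast hn1
  have hgnonneg : 0 ≤ (1 / (n : ℝ)) * ∑ k ∈ Finset.Icc 1 n, |s k - t| ^ p := by
    apply mul_nonneg (by positivity)
    exact Finset.sum_nonneg fun k _ => Real.rpow_nonneg (abs_nonneg _) _
  rw [Real.norm_eq_abs, abs_of_nonneg hgnonneg] at hn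
  have hfnonneg : 0 ≤ (1 / (n : ℝ)) * ∑ k ∈ Finset.Icc 1 n, |s k - t| ^ q := by
    apply mul_nonneg (by positivity)
    exact Finset.sum_nonneg fun k _ => Real.rpow_nonneg (abs_nonneg _) _
  rw [Real.norm_eq_abs, abs_of_nonneg hfnonneg]
  have hsum : ∑ k ∈ Finset.Icc 1 n, |s k - t| ^ q ≤
      ∑ k ∈ Finset.Icc 1 n, (δ ^ q + C * |s k - t| ^ p) :=
    Finset.sum_le_sum fun k _ => key _ (abs_nonneg _) (hbM k)
  have hcard : (Finset.Icc 1 n).card = n := by simp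
  have hsum2 : ∑ k ∈ Finset.Icc 1 n, (δ ^ q + C * |s k - t| ^ p)
      = (n : ℝ) * δ ^ q + C * ∑ k ∈ Finset.Icc 1 n, |s k - t| ^ p := by
    rw [Finset.sum_add_distrib, Finset.sum_const, hcard, ← Finset.mul_sum]
    ring
  calc (1 / (n : ℝ)) * ∑ k ∈ Finset.Icc 1 n, |s k - t| ^ q
      ≤ (1 / (n : ℝ)) * ((n : ℝ) * δ ^ q + C * ∑ k ∈ Finset.Icc 1 n, |s k - t| ^ p) := by
        rw [← hsum2]; exact mul_le_mul_of_nonneg_left hsum (by positivity)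
    _ = δ ^ q + C * ((1 / (n : ℝ)) * ∑ k ∈ Finset.Icc 1 n, |s k - t| ^ p) := by
        field_simp
    _ < ε / 2 + C * (ε / (2 * C)) := by
        rw [hδq]
        have := mul_lt_mul_of_pos_left hn hC0
        linarith
    _ = ε := by field_simp; ring

/-- For a bounded real sequence, strong p-Cesàro convergence and strong q-Cesàro
convergence (to the same limit) are equivalent, for any `p, q > 0`. -/
theorem strong_cesaro_equiv (s : ℕ → ℝ) (t : ℝ) (R : ℝ) (hbdd : ∀ k, |s k| ≤ R)
    (p q : ℝ) (hp : 0 < p) (hq : 0 < q) :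
    Tendsto (fun n : ℕ => (1 / (n : ℝ)) * ∑ k ∈ Finset.Icc 1 n, |s k - t| ^ p)
        atTop (nhds 0) ↔
      Tendsto (fun n : ℕ => (1 / (n : ℝ)) * ∑ k ∈ Finset.Icc 1 n, |s k - t| ^ q)
        atTop (nhds 0) := by
  constructor
  · exact strong_cesaro_aux s t R hbdd p q hp hq
  · exact strong_cesaro_aux s t R hbdd q p hq hp
end

section
/- If a bounded sequence of real numbers (s_k) is statistically pre-Cauchy, then lim_{n→∞} (1/n²)·∑_{i,j ≤ n} |s_i − s_j| = 0. -/
open Filter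

/-- If a bounded real sequence is statistically pre-Cauchy, then
`(1/n²)·∑_{i,j ≤ n} |s_i − s_j| → 0`. -/
theorem stat_pre_cauchy_implies_sum_condition (s : ℕ → ℝ)
    (R : ℝ) (hbdd : ∀ k, |s k| ≤ R)
    (h : ∀ ε > 0, Tendsto
      (fun n : ℕ =>
        ((((Finset.Icc 1 n) ×ˢ (Finset.Icc 1 n)).filter
          (fun ij => ε ≤ |s ij.1 - s ij.2|)).card : ℝ) / (n : ℝ) ^ 2)
      atTop (nhds 0)) :
    Tendsto
      (fun n : ℕ =>
        (1 / (n : ℝ) ^ 2) * ∑ i ∈ Finset.Icc 1 n, ∑ j ∈ Finset.Icc 1 n, |s i - s j|)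
      atTop (nhds 0) := by
  have hR : 0 ≤ R := le_trans (abs_nonneg _) (hbdd 0)
  rw [Metric.tendsto_atTop]
  intro ε hε
  set δ := ε / (2 * (2 * R + 1)) with hδdef
  have hδ : 0 < δ := by positivity
  have hε2 : (0:ℝ) < ε / 2 := by positivity
  obtain ⟨N, hN⟩ := (Metric.tendsto_atTop.mp (h (ε / 2) hε2)) δ hδ
  refine ⟨max N 1, fun n hn => ?_⟩
  have hn1 : 1 ≤ n := le_trans (le_max_right _ _) hn
  have hnN : N ≤ n := le_trans (le_max_left _ _) hn
  have hnpos : (0:ℝ) < (n:ℝ) ^ 2 := by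
    have : (1:ℝ) ≤ (n:ℝ) := by exact_mod_cast hn1
    positivity
  set P := (Finset.Icc 1 n) ×ˢ (Finset.Icc 1 n) with hP
  set F := P.filter (fun ij => ε / 2 ≤ |s ij.1 - s ij.2|) with hF
  -- rewrite the double sum as a sum over the product
  have hsum : ∑ i ∈ Finset.Icc 1 n, ∑ j ∈ Finset.Icc 1 n, |s i - s j|
      = ∑ ij ∈ P, |s ij.1 - s ij.2| := by
    rw [hP, Finset.sum_product]
  have hsplit : ∑ ij ∈ P, |s ij.1 - s ij.2|
      = ∑ ij ∈ F, |s ij.1 - s ij.2|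
        + ∑ ij ∈ P.filter (fun ij => ¬ (ε / 2 ≤ |s ij.1 - s ij.2|)), |s ij.1 - s ij.2| := by
    rw [hF, Finset.sum_filter_add_sum_filter_not]
  have hbig : ∑ ij ∈ F, |s ij.1 - s ij.2| ≤ (F.card : ℝ) * (2 * R) := by
    calc ∑ ij ∈ F, |s ij.1 - s ij.2| ≤ ∑ _ij ∈ F, (2 * R) := by
          refine Finset.sum_le_sum fun ij _ => ?_
          calc |s ij.1 - s ij.2| ≤ |s ij.1| + |s ij.2| := abs_sub _ _
            _ ≤ R + R := add_le_add (hbdd _) (hbdd _)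
            _ = 2 * R := by ring
      _ = (F.card : ℝ) * (2 * R) := by rw [Finset.sum_const, nsmul_eq_mul]
  have hPcard : (P.card : ℝ) = (n : ℝ) ^ 2 := by
    rw [hP, Finset.card_product, Nat.card_Icc]
    push_cast
    ring
  have hsmall : ∑ ij ∈ P.filter (fun ij => ¬ (ε / 2 ≤ |s ij.1 - s ij.2|)), |s ij.1 - s ij.2|
      ≤ (n : ℝ) ^ 2 * (ε / 2) := by
    calc ∑ ij ∈ P.filter (fun ij => ¬ (ε / 2 ≤ |s ij.1 - s ij.2|)), |s ij.1 - s ij.2|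
        ≤ ∑ _ij ∈ P.filter (fun ij => ¬ (ε / 2 ≤ |s ij.1 - s ij.2|)), (ε / 2) := by
          refine Finset.sum_le_sum fun ij hij => ?_
          have := (Finset.mem_filter.mp hij).2
          linarith [not_le.mp this]
      _ = ((P.filter (fun ij => ¬ (ε / 2 ≤ |s ij.1 - s ij.2|))).card : ℝ) * (ε / 2) := by
          rw [Finset.sum_const, nsmul_eq_mul]
      _ ≤ (P.card : ℝ) * (ε / 2) := by
          exact_mod_cast mul_le_mul_of_nonneg_right
            (Nat.cast_le.mpr (Finset.card_filter_le _ _) : ((P.filter (fun ij => ¬ (ε / 2 ≤ |s ij.1 - s ij.2|))).card : ℝ) ≤ (P.card : ℝ)) hε2.le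
      _ = (n : ℝ) ^ 2 * (ε / 2) := by rw [hPcard]
  have hFδ : (F.card : ℝ) / (n : ℝ) ^ 2 < δ := by
    have := hN n hnN
    rw [Real.dist_eq, sub_zero] at this
    calc (F.card : ℝ) / (n : ℝ) ^ 2 ≤ |(F.card : ℝ) / (n : ℝ) ^ 2| := le_abs_self _
      _ < δ := this
  have hnonneg : 0 ≤ ∑ ij ∈ P, |s ij.1 - s ij.2| :=
    Finset.sum_nonneg fun _ _ => abs_nonneg _
  rw [Real.dist_eq, sub_zero]
  have hfn : (1 / (n : ℝ) ^ 2) * ∑ i ∈ Finset.Icc 1 n, ∑ j ∈ Finset.Icc 1 n, |s i - s j|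
      ≤ (2 * R + 1) * ((F.card : ℝ) / (n : ℝ) ^ 2) + ε / 2 := by
    rw [hsum, hsplit]
    have hFnn : (0:ℝ) ≤ (F.card : ℝ) / (n : ℝ) ^ 2 := by positivity
    rw [mul_add]
    have h1 : (1 / (n : ℝ) ^ 2) * ∑ ij ∈ F, |s ij.1 - s ij.2|
        ≤ (2 * R + 1) * ((F.card : ℝ) / (n : ℝ) ^ 2) := by
      have : (1 / (n : ℝ) ^ 2) * ∑ ij ∈ F, |s ij.1 - s ij.2|
          ≤ (1 / (n : ℝ) ^ 2) * ((F.card : ℝ) * (2 * R)) := by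
        apply mul_le_mul_of_nonneg_left hbig
        positivity
      refine this.trans ?_
      have heq : (1 / (n : ℝ) ^ 2) * ((F.card : ℝ) * (2 * R))
          = ((F.card : ℝ) / (n : ℝ) ^ 2) * (2 * R) := by ring
      rw [heq]
      nlinarith [hFnn]
    have h2 : (1 / (n : ℝ) ^ 2) *
        ∑ ij ∈ P.filter (fun ij => ¬ (ε / 2 ≤ |s ij.1 - s ij.2|)), |s ij.1 - s ij.2| ≤ ε / 2 := by
      have := mul_le_mul_of_nonneg_left hsmall (by positivity : (0:ℝ) ≤ 1 / (n : ℝ) ^ 2)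
      refine this.trans ?_
      rw [one_div, inv_mul_cancel_left₀ (ne_of_gt hnpos)]
    linarith
  have hlast : (2 * R + 1) * ((F.card : ℝ) / (n : ℝ) ^ 2) + ε / 2 < ε := by
    have h2R : (0:ℝ) < 2 * R + 1 := by linarith
    have := mul_lt_mul_of_pos_left hFδ h2R
    rw [hδdef] at this
    have heq : (2 * R + 1) * (ε / (2 * (2 * R + 1))) = ε / 2 := by
      field_simp
    rw [heq] at this
    linarith
  have hnn : 0 ≤ (1 / (n : ℝ) ^ 2) * ∑ i ∈ Finset.Icc 1 n, ∑ j ∈ Finset.Icc 1 n, |s i - s j| :=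
    mul_nonneg (by positivity)
      (Finset.sum_nonneg fun _ _ => Finset.sum_nonneg fun _ _ => abs_nonneg _)
  rw [abs_of_nonneg hnn]
  linarith
end

section
/- Every statistically convergent sequence of real numbers is statistically pre-Cauchy. -/
open Filter

/-- Every statistically convergent real sequence is statistically pre-Cauchy. -/
theorem statistical_convergent_implies_stat_pre_cauchy (s : ℕ → ℝ) (t : ℝ)
    (hstat : ∀ ε > 0, Tendsto
      (fun n : ℕ =>
        (((Finset.Icc 1 n).filter (fun k => ε ≤ |s k - t|)).card : ℝ) / (n : ℝ))
      atTop (nhds 0)) :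
    ∀ ε > 0, Tendsto
      (fun n : ℕ =>
        ((((Finset.Icc 1 n) ×ˢ (Finset.Icc 1 n)).filter
          (fun ij => ε ≤ |s ij.1 - s ij.2|)).card : ℝ) / (n : ℝ) ^ 2)
      atTop (nhds 0) := by
  intro ε hε
  have hε2 : ε / 2 > 0 := by linarith
  have hg := hstat (ε / 2) hε2
  set A : ℕ → Finset ℕ := fun n => (Finset.Icc 1 n).filter (fun k => ε / 2 ≤ |s k - t|)
    with hA
  set f : ℕ → ℝ := fun n =>
      ((((Finset.Icc 1 n) ×ˢ (Finset.Icc 1 n)).filter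
        (fun ij => ε ≤ |s ij.1 - s ij.2|)).card : ℝ) / (n : ℝ) ^ 2 with hf
  set g : ℕ → ℝ := fun n => ((A n).card : ℝ) / (n : ℝ) with hgdef
  have hsub : ∀ n : ℕ, ((Finset.Icc 1 n) ×ˢ (Finset.Icc 1 n)).filter
      (fun ij => ε ≤ |s ij.1 - s ij.2|) ⊆
      (A n ×ˢ Finset.Icc 1 n) ∪ (Finset.Icc 1 n ×ˢ A n) := by
    intro n ij hij
    simp only [Finset.mem_filter, Finset.mem_product] at hij
    obtain ⟨⟨h1, h2⟩, h3⟩ := hij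
    have : ε / 2 ≤ |s ij.1 - t| ∨ ε / 2 ≤ |s ij.2 - t| := by
      by_contra h
      push_neg at h
      have := abs_sub_abs_le_abs_sub (s ij.1 - t) (s ij.2 - t)
      have habs : |s ij.1 - s ij.2| ≤ |s ij.1 - t| + |s ij.2 - t| := by
        calc |s ij.1 - s ij.2| = |(s ij.1 - t) - (s ij.2 - t)| := by ring_nf
          _ ≤ |s ij.1 - t| + |s ij.2 - t| := abs_sub _ _
      linarith [h.1, h.2]
    rcases this with h | h
    · exact Finset.mem_union_left _ (by
        simp only [Finset.mem_product, hA, Finset.mem_filter]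
        exact ⟨⟨h1, h⟩, h2⟩)
    · exact Finset.mem_union_right _ (by
        simp only [Finset.mem_product, hA, Finset.mem_filter]
        exact ⟨h1, h2, h⟩)
  have hcard : ∀ n : ℕ, ((((Finset.Icc 1 n) ×ˢ (Finset.Icc 1 n)).filter
      (fun ij => ε ≤ |s ij.1 - s ij.2|)).card : ℝ) ≤ 2 * (A n).card * n := by
    intro n
    have h1 := Finset.card_le_card (hsub n)
    have h2 := Finset.card_union_le (A n ×ˢ Finset.Icc 1 n) (Finset.Icc 1 n ×ˢ A n)
    have h3 : ((A n ×ˢ Finset.Icc 1 n).card + (Finset.Icc 1 n ×ˢ A n).card : ℕ)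
        = 2 * (A n).card * n := by
      simp [Finset.card_product, Nat.card_Icc]
      ring
    have := le_trans h1 (h3 ▸ h2)
    exact_mod_cast this
  have hbound : ∀ n : ℕ, f n ≤ 2 * g n := by
    intro n
    rcases Nat.eq_zero_or_pos n with rfl | hn
    · simp [hf, hgdef, hA]
    · have hn' : (0 : ℝ) < n := by exact_mod_cast hn
      rw [hf, hgdef]
      rw [div_le_iff₀ (by positivity)]
      calc ((((Finset.Icc 1 n) ×ˢ (Finset.Icc 1 n)).filter
            (fun ij => ε ≤ |s ij.1 - s ij.2|)).card : ℝ)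
          ≤ 2 * (A n).card * n := hcard n
        _ = 2 * (((A n).card : ℝ) / n) * (n : ℝ) ^ 2 := by field_simp
  have hlow : ∀ n : ℕ, (0 : ℝ) ≤ f n := by
    intro n; rw [hf]; positivity
  have htwog : Tendsto (fun n => 2 * g n) atTop (nhds 0) := by
    have := hg.const_mul (2 : ℝ)
    simpa using this
  exact squeeze_zero hlow hbound htwog
end

section
/- A bounded sequence of real numbers (s_k) is almost convergent to s (i.e., L(s) = s for every Banach limit L on ℓ∞) if and only if (1/n)∑_{k=1}^n s_{k+l} → s as n → ∞, uniformly in l ∈ ℕ₀. -/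
open Filter BoundedContinuousFunction
open Topology

/-- The shift operator on ℓ∞ (bounded real sequences). -/
noncomputable def shiftBCF (x : ℕ →ᵇ ℝ) : ℕ →ᵇ ℝ :=
  x.compContinuous ⟨fun n => n + 1, continuous_of_discreteTopology⟩

/-- A Banach limit: a linear functional on ℓ∞ with `L(1)=1`, positivity and
shift-invariance. -/
def IsBanachLimit (L : (ℕ →ᵇ ℝ) →ₗ[ℝ] ℝ) : Prop :=
  L 1 = 1 ∧ (∀ x : ℕ →ᵇ ℝ, (∀ n, 0 ≤ x n) → 0 ≤ L x) ∧
    ∀ x : ℕ →ᵇ ℝ, L (shiftBCF x) = L x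

namespace Lorentz

@[simp] lemma shiftBCF_apply (x : ℕ →ᵇ ℝ) (m : ℕ) : shiftBCF x m = x (m + 1) := rfl

lemma shift_iter_apply (k : ℕ) (x : ℕ →ᵇ ℝ) (m : ℕ) : (shiftBCF^[k] x) m = x (m + k) := by
  induction k generalizing x with
  | zero => simp
  | succ k ih =>
    rw [Function.iterate_succ_apply, ih (shiftBCF x), shiftBCF_apply]
    ring_nf

/-- The inner partial sums. -/
noncomputable def usum (x : ℕ →ᵇ ℝ) (n : ℕ) : ℝ :=
  ⨆ l : ℕ, ∑ k ∈ Finset.Icc 1 n, x (k + l)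

lemma sum_le (x : ℕ →ᵇ ℝ) (n l : ℕ) : ∑ k ∈ Finset.Icc 1 n, x (k + l) ≤ n * ‖x‖ := by
  calc ∑ k ∈ Finset.Icc 1 n, x (k + l) ≤ ∑ k ∈ Finset.Icc 1 n, ‖x‖ :=
        Finset.sum_le_sum fun k _ => le_trans (le_abs_self _) (x.norm_coe_le_norm (k + l))
    _ = n * ‖x‖ := by
        rw [Finset.sum_const, Nat.card_Icc, nsmul_eq_mul]
        norm_num

lemma bddAbove_sum (x : ℕ →ᵇ ℝ) (n : ℕ) :
    BddAbove (Set.range fun l : ℕ => ∑ k ∈ Finset.Icc 1 n, x (k + l)) := by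
  refine ⟨n * ‖x‖, ?_⟩
  rintro _ ⟨l, rfl⟩
  exact sum_le x n l

lemma le_usum (x : ℕ →ᵇ ℝ) (n l : ℕ) : ∑ k ∈ Finset.Icc 1 n, x (k + l) ≤ usum x n :=
  le_ciSup (bddAbove_sum x n) l

lemma usum_le (x : ℕ →ᵇ ℝ) (n : ℕ) {c : ℝ}
    (h : ∀ l, ∑ k ∈ Finset.Icc 1 n, x (k + l) ≤ c) : usum x n ≤ c :=
  ciSup_le h

lemma sum_split (x : ℕ →ᵇ ℝ) (m n l : ℕ) :
    ∑ k ∈ Finset.Icc 1 (m + n), x (k + l) =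
      (∑ k ∈ Finset.Icc 1 m, x (k + l)) + ∑ k ∈ Finset.Icc 1 n, x (k + (m + l)) := by
  have h1 : ∀ j : ℕ, Finset.Icc 1 j = Finset.Ioc 0 j := fun j => by
    rw [← Finset.Icc_add_one_left_eq_Ioc, zero_add]
  rw [h1, h1, h1, ← Finset.sum_Ioc_consecutive _ (Nat.zero_le m) (Nat.le_add_right m n)]
  congr 1
  rw [show Finset.Ioc m (m + n) = Finset.map (addLeftEmbedding m) (Finset.Ioc 0 n) by
    rw [Finset.map_add_left_Ioc]; ring_nf, Finset.sum_map]
  refine Finset.sum_congr rfl fun j _ => ?_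
  simp only [addLeftEmbedding_apply]
  congr 1
  omega

lemma usum_subadd (x : ℕ →ᵇ ℝ) : Subadditive (usum x) := by
  intro m n
  refine usum_le x (m + n) fun l => ?_
  rw [sum_split]
  exact add_le_add (le_usum x m l) (le_usum x n (m + l))

lemma usum_zero_eq (x : ℕ →ᵇ ℝ) : usum x 0 = 0 := by
  simp [usum]

lemma neg_le_usum_div (x : ℕ →ᵇ ℝ) (n : ℕ) : -‖x‖ ≤ usum x n / n := by
  rcases Nat.eq_zero_or_pos n with h | h
  · simp [h, usum_zero_eq, norm_nonneg]
  · have hn : (0:ℝ) < n := by exact_mod_cast h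
    rw [le_div_iff₀ hn]
    calc -‖x‖ * n = -(n * ‖x‖) := by ring
      _ ≤ ∑ k ∈ Finset.Icc 1 n, x (k + 0) := by
          have : ∑ k ∈ Finset.Icc 1 n, (-x) (k + 0) ≤ n * ‖x‖ := by
            have := sum_le (-x) n 0
            simpa using this
          have h2 : ∑ k ∈ Finset.Icc 1 n, (-x) (k + 0) =
              -∑ k ∈ Finset.Icc 1 n, x (k + 0) := by
            simp
          linarith [this, h2.symm.le]
      _ ≤ usum x n := le_usum x n 0

lemma bddBelow_usum_div (x : ℕ →ᵇ ℝ) :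
    BddBelow (Set.range fun n : ℕ => usum x n / n) := by
  refine ⟨-‖x‖, ?_⟩
  rintro _ ⟨n, rfl⟩
  exact neg_le_usum_div x n

/-- The upper value of a bounded sequence. -/
noncomputable def qlim (x : ℕ →ᵇ ℝ) : ℝ := (usum_subadd x).lim

lemma tendsto_qlim (x : ℕ →ᵇ ℝ) :
    Tendsto (fun n : ℕ => usum x n / n) atTop (𝓝 (qlim x)) :=
  (usum_subadd x).tendsto_lim (bddBelow_usum_div x)

lemma usum_add_le (x y : ℕ →ᵇ ℝ) (n : ℕ) : usum (x + y) n ≤ usum x n + usum y n := by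
  refine usum_le _ n fun l => ?_
  have h : ∑ k ∈ Finset.Icc 1 n, (x + y) (k + l) =
      (∑ k ∈ Finset.Icc 1 n, x (k + l)) + ∑ k ∈ Finset.Icc 1 n, y (k + l) := by
    rw [← Finset.sum_add_distrib]
    exact Finset.sum_congr rfl fun k _ => rfl
  rw [h]
  exact add_le_add (le_usum x n l) (le_usum y n l)

lemma qlim_add_le (x y : ℕ →ᵇ ℝ) : qlim (x + y) ≤ qlim x + qlim y := by
  refine le_of_tendsto_of_tendsto' (tendsto_qlim (x + y))
    ((tendsto_qlim x).add (tendsto_qlim y)) fun n => ?_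
  rcases Nat.eq_zero_or_pos n with h | h
  · simp [h, usum_zero_eq]
  · have hn : (0:ℝ) < n := by exact_mod_cast h
    rw [← add_div]
    gcongr
    exact usum_add_le x y n

lemma usum_smul (x : ℕ →ᵇ ℝ) {c : ℝ} (hc : 0 ≤ c) (n : ℕ) : usum (c • x) n = c * usum x n := by
  rw [usum, usum, Real.mul_iSup_of_nonneg hc]
  congr 1; funext l
  rw [Finset.mul_sum]
  exact Finset.sum_congr rfl fun k _ => rfl

lemma qlim_smul (c : ℝ) (hc : 0 < c) (x : ℕ →ᵇ ℝ) : qlim (c • x) = c * qlim x := by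
  refine tendsto_nhds_unique (tendsto_qlim (c • x)) ?_
  have h : (fun n : ℕ => usum (c • x) n / n) = fun n : ℕ => c * (usum x n / n) := by
    funext n; rw [usum_smul x hc.le, mul_div_assoc]
  rw [h]
  exact (tendsto_qlim x).const_mul c

lemma qlim_le_of_forall_le (x : ℕ →ᵇ ℝ) {c : ℝ} (h : ∀ m, x m ≤ c) : qlim x ≤ c := by
  refine le_of_tendsto (tendsto_qlim x) ?_
  filter_upwards [eventually_ge_atTop 1] with n hn
  have hn' : (0:ℝ) < n := by exact_mod_cast hn
  rw [div_le_iff₀ hn']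
  refine usum_le x n fun l => ?_
  calc ∑ k ∈ Finset.Icc 1 n, x (k + l) ≤ ∑ k ∈ Finset.Icc 1 n, c :=
        Finset.sum_le_sum fun k _ => h _
    _ = c * n := by rw [Finset.sum_const, Nat.card_Icc, nsmul_eq_mul]; push_cast; ring

lemma qlim_zero : qlim (0 : ℕ →ᵇ ℝ) = 0 := by
  refine tendsto_nhds_unique (tendsto_qlim 0) ?_
  have h : (fun n : ℕ => usum (0 : ℕ →ᵇ ℝ) n / n) = fun _ : ℕ => (0:ℝ) := by
    funext n
    have : usum (0 : ℕ →ᵇ ℝ) n = 0 := by simp [usum]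
    rw [this, zero_div]
  rw [h]; exact tendsto_const_nhds

lemma qlim_smul_one (c : ℝ) : qlim (c • (1 : ℕ →ᵇ ℝ)) = c := by
  refine tendsto_nhds_unique (tendsto_qlim _) ?_
  have h : ∀ᶠ n : ℕ in atTop, usum (c • (1 : ℕ →ᵇ ℝ)) n / n = c := by
    filter_upwards [eventually_ge_atTop 1] with n hn
    have hn' : (0:ℝ) < n := by exact_mod_cast hn
    have h1 : usum (c • (1 : ℕ →ᵇ ℝ)) n = n * c := by
      have : ∀ l : ℕ, ∑ k ∈ Finset.Icc 1 n, (c • (1 : ℕ →ᵇ ℝ)) (k + l) = n * c := by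
        intro l
        have : ∀ k, (c • (1 : ℕ →ᵇ ℝ)) k = c := fun k => by simp
        rw [Finset.sum_congr rfl fun k _ => this (k + l), Finset.sum_const, Nat.card_Icc,
          nsmul_eq_mul]
        push_cast; ring
      rw [usum]
      rw [funext this]
      exact ciSup_const
    rw [h1, mul_comm, mul_div_assoc, div_self hn'.ne', mul_one]
  refine Tendsto.congr' ?_ tendsto_const_nhds
  filter_upwards [h] with n hn
  exact hn.symm

lemma qlim_one : qlim (1 : ℕ →ᵇ ℝ) = 1 := by
  simpa using qlim_smul_one 1

lemma qlim_neg_one : qlim (-(1 : ℕ →ᵇ ℝ)) = -1 := by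
  have h : (-1 : ℝ) • (1 : ℕ →ᵇ ℝ) = -(1 : ℕ →ᵇ ℝ) := by ext m; simp
  rw [← h]
  exact qlim_smul_one (-1)

lemma neg_qlim_le (x : ℕ →ᵇ ℝ) : -qlim (-x) ≤ qlim x := by
  have h := qlim_add_le x (-x)
  rw [add_neg_cancel, qlim_zero] at h
  linarith

lemma qlim_shift_sub_nonpos (x : ℕ →ᵇ ℝ) : qlim (shiftBCF x - x) ≤ 0 := by
  have key : ∀ n ≥ 1, usum (shiftBCF x - x) n / n ≤ 2 * ‖x‖ / n := by
    intro n hn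
    have hn' : (0:ℝ) < n := by exact_mod_cast hn
    gcongr
    refine usum_le _ n fun l => ?_
    have h1 : ∑ k ∈ Finset.Icc 1 n, (shiftBCF x - x) (k + l) = x (n + l + 1) - x (l + 1) := by
      have h2 : ∀ k, (shiftBCF x - x) (k + l) = x (k + l + 1) - x (k + l) := fun k => rfl
      rw [Finset.sum_congr rfl fun k _ => h2 k, ← Finset.Ico_add_one_right_eq_Icc, Finset.sum_Ico_eq_sum_range]
      have h3 : ∀ i : ℕ, x (1 + i + l + 1) - x (1 + i + l) =
          (fun j => x (j + l + 1)) (i + 1) - (fun j => x (j + l + 1)) i := by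
        intro i
        simp only []
        congr 2 <;> omega
      rw [Finset.sum_congr rfl fun i _ => h3 i, Finset.sum_range_sub (fun j => x (j + l + 1)) _]
      simp only [Nat.add_sub_cancel, zero_add]
    rw [h1]
    have b1 := (abs_le.mp (x.norm_coe_le_norm (n + l + 1)))
    have b2 := (abs_le.mp (x.norm_coe_le_norm (l + 1)))
    linarith [b1.1, b1.2, b2.1, b2.2]
  have h0 : Tendsto (fun n : ℕ => 2 * ‖x‖ / n) atTop (𝓝 0) :=
    tendsto_const_div_atTop_nhds_zero_nat _
  refine le_of_tendsto_of_tendsto (tendsto_qlim _) h0 ?_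
  filter_upwards [eventually_ge_atTop 1] with n hn
  exact key n hn

lemma qlim_sub_shift_nonpos (x : ℕ →ᵇ ℝ) : qlim (x - shiftBCF x) ≤ 0 := by
  have key : ∀ n ≥ 1, usum (x - shiftBCF x) n / n ≤ 2 * ‖x‖ / n := by
    intro n hn
    have hn' : (0:ℝ) < n := by exact_mod_cast hn
    gcongr
    refine usum_le _ n fun l => ?_
    have h1 : ∑ k ∈ Finset.Icc 1 n, (x - shiftBCF x) (k + l) =
        -(x (n + l + 1) - x (l + 1)) := by
      have h2 : ∀ k, (x - shiftBCF x) (k + l) = -((shiftBCF x - x) (k + l)) := fun k => by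
        show x (k + l) - x (k + l + 1) = -(x (k + l + 1) - x (k + l))
        ring
      rw [Finset.sum_congr rfl fun k _ => h2 k, Finset.sum_neg_distrib]
      congr 1
      have h2' : ∀ k, (shiftBCF x - x) (k + l) = x (k + l + 1) - x (k + l) := fun k => rfl
      rw [Finset.sum_congr rfl fun k _ => h2' k, ← Finset.Ico_add_one_right_eq_Icc,
        Finset.sum_Ico_eq_sum_range]
      have h3 : ∀ i : ℕ, x (1 + i + l + 1) - x (1 + i + l) =
          (fun j => x (j + l + 1)) (i + 1) - (fun j => x (j + l + 1)) i := by
        intro i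
        simp only []
        congr 2 <;> omega
      rw [Finset.sum_congr rfl fun i _ => h3 i, Finset.sum_range_sub (fun j => x (j + l + 1)) _]
      simp only [Nat.add_sub_cancel, zero_add]
    rw [h1]
    have b1 := abs_le.mp (x.norm_coe_le_norm (n + l + 1))
    have b2 := abs_le.mp (x.norm_coe_le_norm (l + 1))
    linarith [b1.1, b1.2, b2.1, b2.2]
  have h0 : Tendsto (fun n : ℕ => 2 * ‖x‖ / n) atTop (𝓝 0) :=
    tendsto_const_div_atTop_nhds_zero_nat _
  refine le_of_tendsto_of_tendsto (tendsto_qlim _) h0 ?_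
  filter_upwards [eventually_ge_atTop 1] with n hn
  exact key n hn

lemma qlim_le_s (x : ℕ →ᵇ ℝ) {c : ℝ} (h : ∀ m, x m ≤ c) : qlim x ≤ c := qlim_le_of_forall_le x h

lemma banach_apply_le (L : (ℕ →ᵇ ℝ) →ₗ[ℝ] ℝ) (hL : IsBanachLimit L) {y : ℕ →ᵇ ℝ} {c : ℝ}
    (h : ∀ m, y m ≤ c) : L y ≤ c := by
  obtain ⟨h1, hpos, _⟩ := hL
  have hnn := hpos (c • 1 - y) (fun m => by
    have : (c • (1:ℕ →ᵇ ℝ) - y) m = c - y m := by simp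
    rw [this]
    linarith [h m])
  have h2 : L (c • 1 - y) = c - L y := by
    rw [map_sub, map_smul, h1, smul_eq_mul, mul_one]
  linarith

lemma L_iterate (L : (ℕ →ᵇ ℝ) →ₗ[ℝ] ℝ) (hL : IsBanachLimit L) (k : ℕ) (y : ℕ →ᵇ ℝ) :
    L (shiftBCF^[k] y) = L y := by
  induction k with
  | zero => rfl
  | succ k ih => rw [Function.iterate_succ_apply', hL.2.2, ih]

lemma banach_le_qlim (L : (ℕ →ᵇ ℝ) →ₗ[ℝ] ℝ) (hL : IsBanachLimit L) (x : ℕ →ᵇ ℝ) :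
    L x ≤ qlim x := by
  have key : ∀ n : ℕ, 1 ≤ n → L x ≤ usum x n / n := by
    intro n hn
    have hn' : (0:ℝ) < n := by exact_mod_cast hn
    set y : ℕ →ᵇ ℝ := (n:ℝ)⁻¹ • ∑ k ∈ Finset.Icc 1 n, shiftBCF^[k] x with hy
    have hyL : L y = L x := by
      rw [hy, map_smul, map_sum, Finset.sum_congr rfl fun k _ => L_iterate L hL k x,
        Finset.sum_const, Nat.card_Icc, smul_eq_mul, nsmul_eq_mul]
      push_cast
      field_simp
    have hyb : ∀ m, y m ≤ usum x n / n := by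
      intro m
      have h1 : y m = (n:ℝ)⁻¹ * ∑ k ∈ Finset.Icc 1 n, x (k + m) := by
        rw [hy]
        simp only [BoundedContinuousFunction.coe_smul, Pi.smul_apply, smul_eq_mul]
        congr 1
        rw [BoundedContinuousFunction.coe_sum, Finset.sum_apply]
        exact Finset.sum_congr rfl fun k _ => by rw [shift_iter_apply, add_comm]
      rw [h1, div_eq_inv_mul]
      exact mul_le_mul_of_nonneg_left (le_usum x n m) (by positivity)
    rw [← hyL]
    exact banach_apply_le L hL hyb
  refine ge_of_tendsto (tendsto_qlim x) ?_
  filter_upwards [eventually_ge_atTop 1] with n hn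
  exact key n hn

lemma isBanachLimit_of_le (g : (ℕ →ᵇ ℝ) →ₗ[ℝ] ℝ) (hg : ∀ y, g y ≤ qlim y) :
    IsBanachLimit g := by
  have h1 : g 1 = 1 := by
    have a := hg 1
    rw [qlim_one] at a
    have b := hg (-1)
    rw [qlim_neg_one, map_neg] at b
    linarith
  refine ⟨h1, ?_, ?_⟩
  · intro y hy
    have a := hg (-y)
    have b : qlim (-y) ≤ 0 := qlim_le_of_forall_le (-y) fun m => by
      show -(y m) ≤ 0
      linarith [hy m]
    rw [map_neg] at a
    linarith
  · intro y
    have a := hg (shiftBCF y - y)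
    rw [map_sub] at a
    have a' := qlim_shift_sub_nonpos y
    have b := hg (y - shiftBCF y)
    rw [map_sub] at b
    have b' := qlim_sub_shift_nonpos y
    linarith

lemma c_mul_qlim_le (x : ℕ →ᵇ ℝ) (c : ℝ) : c * qlim x ≤ qlim (c • x) := by
  rcases lt_trichotomy c 0 with hc | hc | hc
  · have h : c • x = (-c) • (-x) := by rw [smul_neg, neg_smul, neg_neg]
    rw [h, qlim_smul (-c) (by linarith)]
    have hn := neg_qlim_le x
    nlinarith
  · simp [hc, qlim_zero]
  · rw [qlim_smul c hc]

lemma exists_BL (x : ℕ →ᵇ ℝ) : ∃ L, IsBanachLimit L ∧ L x = qlim x := by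
  by_cases hx : x = (0 : ℕ →ᵇ ℝ)
  · have hone : (1 : ℕ →ᵇ ℝ) ≠ 0 := by
      intro h
      have := congrArg (fun f : ℕ →ᵇ ℝ => f 0) h
      simp at this
    have hf : ∀ z : (LinearPMap.mkSpanSingleton (K := ℝ) (σ := RingHom.id ℝ) (1 : ℕ →ᵇ ℝ) (1 : ℝ) hone).domain,
        (LinearPMap.mkSpanSingleton (K := ℝ) (σ := RingHom.id ℝ) (1 : ℕ →ᵇ ℝ) (1 : ℝ) hone) z ≤ qlim z := by
      rintro ⟨z, hz⟩
      rcases Submodule.mem_span_singleton.1 hz with ⟨c, rfl⟩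
      rw [LinearPMap.mkSpanSingleton'_apply, RingHom.id_apply, smul_eq_mul, mul_one, qlim_smul_one]
    obtain ⟨g, hg1, hg2⟩ := exists_extension_of_le_sublinear
      (LinearPMap.mkSpanSingleton (K := ℝ) (σ := RingHom.id ℝ) (1 : ℕ →ᵇ ℝ) (1 : ℝ) hone) qlim
      (fun c hc y => qlim_smul c hc y) qlim_add_le hf
    refine ⟨g, isBanachLimit_of_le g hg2, ?_⟩
    rw [hx, map_zero, qlim_zero]
  · have hf : ∀ z : (LinearPMap.mkSpanSingleton (K := ℝ) (σ := RingHom.id ℝ) x (qlim x) hx).domain,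
        (LinearPMap.mkSpanSingleton (K := ℝ) (σ := RingHom.id ℝ) x (qlim x) hx) z ≤ qlim z := by
      rintro ⟨z, hz⟩
      rcases Submodule.mem_span_singleton.1 hz with ⟨c, rfl⟩
      rw [LinearPMap.mkSpanSingleton'_apply, RingHom.id_apply, smul_eq_mul]
      exact c_mul_qlim_le x c
    obtain ⟨g, hg1, hg2⟩ := exists_extension_of_le_sublinear
      (LinearPMap.mkSpanSingleton (K := ℝ) (σ := RingHom.id ℝ) x (qlim x) hx) qlim
      (fun c hc y => qlim_smul c hc y) qlim_add_le hf
    refine ⟨g, isBanachLimit_of_le g hg2, ?_⟩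
    have h := hg1 ⟨x, Submodule.mem_span_singleton_self x⟩
    rw [LinearPMap.mkSpanSingleton_apply] at h
    exact h

end Lorentz

open Lorentz in
/-- Lorentz's theorem: a bounded real sequence is almost convergent to `s`
iff its shifted Cesàro means converge to `s` uniformly in the shift. -/
theorem almost_convergent_iff_uniform_cesaro (x : ℕ →ᵇ ℝ) (s : ℝ) :
    (∀ L : (ℕ →ᵇ ℝ) →ₗ[ℝ] ℝ, IsBanachLimit L → L x = s) ↔
      TendstoUniformly
        (fun (n : ℕ) (l : ℕ) => (1 / (n : ℝ)) * ∑ k ∈ Finset.Icc 1 n, x (k + l))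
        (fun _ => s) atTop := by
  have hsumneg : ∀ (n l : ℕ), ∑ k ∈ Finset.Icc 1 n, (-x) (k + l) =
      -∑ k ∈ Finset.Icc 1 n, x (k + l) := by
    intro n l
    rw [← Finset.sum_neg_distrib]
    exact Finset.sum_congr rfl fun k _ => rfl
  constructor
  · intro h
    obtain ⟨L1, hB1, hq1⟩ := exists_BL x
    obtain ⟨L2, hB2, hq2⟩ := exists_BL (-x)
    have hs1 : qlim x = s := by rw [← hq1]; exact h L1 hB1
    have hs2 : qlim (-x) = -s := by
      rw [← hq2, map_neg, h L2 hB2]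
    rw [Metric.tendstoUniformly_iff]
    intro ε hε
    have h1 : ∀ᶠ n : ℕ in atTop, usum x n / n < s + ε :=
      (tendsto_qlim x).eventually_lt_const (by rw [hs1]; linarith)
    have h2 : ∀ᶠ n : ℕ in atTop, usum (-x) n / n < -s + ε :=
      (tendsto_qlim (-x)).eventually_lt_const (by rw [hs2]; linarith)
    filter_upwards [h1, h2, eventually_ge_atTop 1] with n hn1 hn2 hn
    intro l
    have hn' : (0:ℝ) < n := by exact_mod_cast hn
    have e1 : (1 / (n:ℝ)) * ∑ k ∈ Finset.Icc 1 n, x (k + l) =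
        (∑ k ∈ Finset.Icc 1 n, x (k + l)) / n := one_div_mul_eq_div _ _
    have b1 : (∑ k ∈ Finset.Icc 1 n, x (k + l)) / n ≤ usum x n / n := by
      gcongr
      exact le_usum x n l
    have b2 : (-∑ k ∈ Finset.Icc 1 n, x (k + l)) / n ≤ usum (-x) n / n := by
      gcongr
      rw [← hsumneg n l]
      exact le_usum (-x) n l
    rw [Real.dist_eq, abs_lt]
    have hb2 : -((∑ k ∈ Finset.Icc 1 n, x (k + l)) / n) ≤ usum (-x) n / n := by
      rw [← neg_div]; exact b2
    constructor
    · rw [e1]; linarith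
    · rw [e1]; linarith
  · intro h L hL
    have hq1 : qlim x ≤ s := by
      refine le_of_forall_pos_le_add fun ε hε => ?_
      rw [Metric.tendstoUniformly_iff] at h
      refine le_of_tendsto (tendsto_qlim x) ?_
      filter_upwards [h ε hε, eventually_ge_atTop 1] with n hn1 hn
      have hn' : (0:ℝ) < n := by exact_mod_cast hn
      rw [div_le_iff₀ hn']
      refine usum_le x n fun l => ?_
      have hd := hn1 l
      rw [Real.dist_eq] at hd
      have hd1 := (abs_lt.1 hd).1
      rw [one_div_mul_eq_div] at hd1
      have h3 : (∑ k ∈ Finset.Icc 1 n, x (k + l)) / n < s + ε := by linarith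
      rw [div_lt_iff₀ hn'] at h3
      linarith
    have hq2 : qlim (-x) ≤ -s := by
      refine le_of_forall_pos_le_add fun ε hε => ?_
      rw [Metric.tendstoUniformly_iff] at h
      refine le_of_tendsto (tendsto_qlim (-x)) ?_
      filter_upwards [h ε hε, eventually_ge_atTop 1] with n hn1 hn
      have hn' : (0:ℝ) < n := by exact_mod_cast hn
      rw [div_le_iff₀ hn']
      refine usum_le (-x) n fun l => ?_
      rw [hsumneg n l]
      have hd := hn1 l
      rw [Real.dist_eq] at hd
      have hd2 := (abs_lt.1 hd).2
      rw [one_div_mul_eq_div] at hd2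
      have h3 : (-∑ k ∈ Finset.Icc 1 n, x (k + l)) / n < -s + ε := by
        rw [neg_div]; linarith
      rw [div_lt_iff₀ hn'] at h3
      linarith
    have l1 := banach_le_qlim L hL x
    have l2 := banach_le_qlim L hL (-x)
    rw [map_neg] at l2
    linarith
end

section
/- Let A = (a_{nk}) be a positive regular summability matrix and (s_k) a sequence of non-negative reals that is A-convergent to 0 (i.e., ∑_k a_{nk} s_k converges for each n and tends to 0 as n → ∞). Then 0 is a cluster point of (s_k), i.e., for every ε > 0 and N there exists k ≥ N with s_k < ε. -/
open Filter

/-- If `A` is a positive regular summability matrix and `(s_k)` is a sequence of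
non-negative reals that is `A`-convergent to `0`, then `0` is a cluster point
of `(s_k)`. -/
theorem zero_cluster_point_of_A_convergent (a : ℕ → ℕ → ℝ) (s : ℕ → ℝ)
    (hpos : ∀ n k, 0 ≤ a n k)
    (hsummable : ∀ n, Summable fun k => |a n k|)
    (hbdd : ∃ C : ℝ, ∀ n, ∑' k, |a n k| ≤ C)
    (hrow : Tendsto (fun n => ∑' k, a n k) atTop (nhds 1))
    (hcol : ∀ k, Tendsto (fun n => a n k) atTop (nhds 0))
    (hs : ∀ k, 0 ≤ s k)
    (hAsummable : ∀ n, Summable fun k => a n k * s k)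
    (hAlim : Tendsto (fun n => ∑' k, a n k * s k) atTop (nhds 0)) :
    ∀ ε > 0, ∀ N : ℕ, ∃ k ≥ N, s k < ε := by
  intro ε hε N
  by_contra hcon
  push_neg at hcon
  have ha : ∀ n, Summable fun k => a n k := fun n => by
    have := hsummable n
    simpa [abs_of_nonneg (hpos n _)] using this
  have key : ∀ n, ε * (∑' k, a n (k + N)) ≤ ∑' k, a n k * s k := by
    intro n
    have hta : Summable fun k => a n (k + N) :=
      ((ha n).comp_injective (add_left_injective N))
    have hts : Summable fun k => a n (k + N) * s (k + N) :=
      ((hAsummable n).comp_injective (add_left_injective N))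
    calc ε * ∑' k, a n (k + N) = ∑' k, ε * a n (k + N) := (tsum_mul_left).symm
      _ ≤ ∑' k, a n (k + N) * s (k + N) := by
          refine Summable.tsum_le_tsum (fun k => ?_) (hta.mul_left ε) hts
          rw [mul_comm]
          exact mul_le_mul_of_nonneg_left (hcon _ (Nat.le_add_left N k)) (hpos n _)
      _ ≤ ∑' k, a n k * s k := by
          rw [← Summable.sum_add_tsum_nat_add N (hAsummable n)]
          exact le_add_of_nonneg_left
            (Finset.sum_nonneg fun i _ => mul_nonneg (hpos n i) (hs i))
  have htail : Tendsto (fun n => ∑' k, a n (k + N)) atTop (nhds 1) := by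
    have heq : ∀ n, ∑' k, a n (k + N)
        = (∑' k, a n k) - ∑ i ∈ Finset.range N, a n i := fun n => by
      have := (Summable.sum_add_tsum_nat_add N (ha n))
      linarith
    simp_rw [heq]
    have hsum0 : Tendsto (fun n => ∑ i ∈ Finset.range N, a n i) atTop (nhds 0) := by
      have := tendsto_finset_sum (Finset.range N) (fun i _ => hcol i)
      simpa using this
    simpa using hrow.sub hsum0
  have hmul : Tendsto (fun n => ε * ∑' k, a n (k + N)) atTop (nhds ε) := by
    simpa using (tendsto_const_nhds.mul htail : Tendsto (fun n => ε * ∑' k, a n (k + N)) atTop (nhds (ε * 1)))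
  have := le_of_tendsto_of_tendsto' hmul hAlim key
  linarith
end

section
/- Let X be a real Banach space, K ⊆ X* weak*-compact and convex, and B ⊆ K a boundary for K (for every x ∈ X there is b ∈ B with b(x) = sup_{x*∈K} x*(x)). Then for every bounded sequence (x_n) in X: sup_{x*∈K} limsup_n x*(x_n) = sup_{x*∈B} limsup_n x*(x_n). -/
open Filter NormedSpace

section SimonsAux

variable {X : Type*} [NormedAddCommGroup X] [NormedSpace ℝ X] [CompleteSpace X]

private noncomputable def simonsSeq (g : ℕ → X → X) : ℕ → X
  | 0 => 0
  | (k+1) => simonsSeq g k + g k (simonsSeq g k)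

private lemma simonsSeq_zero (g : ℕ → X → X) : simonsSeq g 0 = 0 := rfl

private lemma simonsSeq_succ (g : ℕ → X → X) (k : ℕ) :
    simonsSeq g (k+1) = simonsSeq g k + g k (simonsSeq g k) := rfl

/-- A `σ`-convex combination (with weights `2^{-(i+1)}`) of elements of a closed convex
set lies in the set. -/
private lemma sigma_mem {C : Set X} (hconv : Convex ℝ C) (hcl : IsClosed C)
    {v : ℕ → X} (hv : ∀ i, v i ∈ C)
    (hsum : Summable fun i => ((1/2:ℝ))^(i+1) • v i) :
    (∑' i, ((1/2:ℝ))^(i+1) • v i) ∈ C := by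
  set y := ∑' i, ((1/2:ℝ))^(i+1) • v i with hy
  have hps : Tendsto (fun N => ∑ i ∈ Finset.range N, ((1/2:ℝ))^(i+1) • v i) atTop (nhds y) :=
    hsum.hasSum.tendsto_sum_nat
  have hgeo : HasSum (fun i : ℕ => ((1/2:ℝ))^(i+1)) 1 := by
    have h := hasSum_geometric_two' 1
    have he : (fun n : ℕ => (1:ℝ)/2/2^n) = fun i : ℕ => ((1/2:ℝ))^(i+1) := by
      funext i
      rw [div_pow, one_pow, div_div, ← pow_succ']
    rwa [he] at h
  have hts : Tendsto (fun N => ∑ i ∈ Finset.range N, ((1/2:ℝ))^(i+1)) atTop (nhds 1) :=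
    hgeo.tendsto_sum_nat
  have hpos : ∀ N : ℕ, 1 ≤ N → 0 < ∑ i ∈ Finset.range N, ((1/2:ℝ))^(i+1) := by
    intro N hN
    apply Finset.sum_pos
    · intro i _; positivity
    · exact Finset.nonempty_range_iff.mpr (by omega)
  have hmem : ∀ᶠ N in atTop, (∑ i ∈ Finset.range N, ((1/2:ℝ))^(i+1))⁻¹ •
      (∑ i ∈ Finset.range N, ((1/2:ℝ))^(i+1) • v i) ∈ C := by
    filter_upwards [eventually_ge_atTop 1] with N hN
    have ht := hpos N hN
    have := hconv.sum_mem (t := Finset.range N)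
      (w := fun i => (∑ j ∈ Finset.range N, ((1/2:ℝ))^(j+1))⁻¹ * ((1/2:ℝ))^(i+1))
      (z := v)
      (fun i _ => by positivity)
      (by rw [← Finset.mul_sum]; exact inv_mul_cancel₀ ht.ne')
      (fun i _ => hv i)
    rw [Finset.smul_sum]
    simpa [mul_smul] using this
  have hlim : Tendsto (fun N => (∑ i ∈ Finset.range N, ((1/2:ℝ))^(i+1))⁻¹ •
      (∑ i ∈ Finset.range N, ((1/2:ℝ))^(i+1) • v i)) atTop (nhds ((1:ℝ)⁻¹ • y)) :=
    (hts.inv₀ one_ne_zero).smul hps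
  rw [inv_one, one_smul] at hlim
  exact hcl.mem_of_tendsto hlim hmem

/-- The core of Simons' inequality. -/
private lemma simons_core (K Bs : Set (StrongDual ℝ X)) (hBK : Bs ⊆ K)
    (f₀ : StrongDual ℝ X) (hf₀ : f₀ ∈ K)
    (hbdd : ∀ y : X, BddAbove (Set.range fun f : K => (f : StrongDual ℝ X) y))
    (hBbd : ∀ y : X, ∃ b ∈ Bs, b y = ⨆ f : K, (f : StrongDual ℝ X) y)
    (z : ℕ → X) (R : ℝ) (hR : ∀ n, ‖z n‖ ≤ R)
    (c : ℝ) (hc : ∀ y ∈ closure (convexHull ℝ (Set.range z)), c ≤ ⨆ f : K, (f : StrongDual ℝ X) y)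
    (ε : ℝ) (hε : 0 < ε) :
    ∃ b ∈ Bs, ∀ N : ℕ, ∃ j, N ≤ j ∧ c - ε < b (z j) := by
  classical
  set S : X → ℝ := fun y => ⨆ f : K, (f : StrongDual ℝ X) y with hSdef
  have hSle : ∀ (f : StrongDual ℝ X), f ∈ K → ∀ y : X, f y ≤ S y := by
    intro f hf y
    rw [hSdef]
    exact le_ciSup (hbdd y) (⟨f, hf⟩ : K)
  have hR0 : (0:ℝ) ≤ R := le_trans (norm_nonneg (z 0)) (hR 0)
  set W : ℕ → Set X := fun k => closure (convexHull ℝ (z '' Set.Ici k)) with hWdef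
  have hWconv : ∀ k, Convex ℝ (W k) := by
    intro k; simp only [hWdef]; exact (convex_convexHull ℝ _).closure
  have hWcl : ∀ k, IsClosed (W k) := by
    intro k; simp only [hWdef]; exact isClosed_closure
  have hWz : ∀ k j, k ≤ j → z j ∈ W k := by
    intro k j hj; simp only [hWdef]
    exact subset_closure (subset_convexHull ℝ _ ⟨j, hj, rfl⟩)
  have hWmono : ∀ k l, k ≤ l → W l ⊆ W k := by
    intro k l h; simp only [hWdef]
    exact closure_mono (convexHull_mono (Set.image_mono (Set.Ici_subset_Ici.mpr h)))
  have hWR : ∀ k, ∀ y ∈ W k, ‖y‖ ≤ R := by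
    intro k y hy
    have hsub : W k ⊆ Metric.closedBall 0 R := by
      simp only [hWdef]
      apply closure_minimal _ Metric.isClosed_closedBall
      apply convexHull_min _ (convex_closedBall 0 R)
      rintro _ ⟨j, hj, rfl⟩
      rw [Metric.mem_closedBall, dist_zero_right]
      exact hR j
    have := hsub hy
    rwa [Metric.mem_closedBall, dist_zero_right] at this
  -- lower bound for `S` on relevant points
  have hSlb : ∀ (u : X) (k : ℕ), ∀ w ∈ W (k+1),
      -(‖f₀‖ * (‖u‖ + R)) ≤ S (u + ((1/2:ℝ))^k • w) := by
    intro u k w hw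
    have h1 : |f₀ (u + ((1/2:ℝ))^k • w)| ≤ ‖f₀‖ * (‖u‖ + R) := by
      rw [← Real.norm_eq_abs]
      refine (f₀.le_opNorm _).trans ?_
      gcongr
      refine (norm_add_le _ _).trans ?_
      gcongr
      rw [norm_smul, Real.norm_eq_abs, abs_of_nonneg (by positivity)]
      calc ((1/2:ℝ))^k * ‖w‖ ≤ 1 * R := by
            apply mul_le_mul (pow_le_one₀ (by norm_num) (by norm_num)) (hWR _ _ hw)
              (norm_nonneg _) one_pos.le
        _ = R := one_mul R
    have h2 := neg_abs_le (f₀ (u + ((1/2:ℝ))^k • w))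
    have h3 := hSle f₀ hf₀ (u + ((1/2:ℝ))^k • w)
    linarith
  -- approximate minimizer selection
  have sel : ∀ (k : ℕ) (u : X), ∃ y, y ∈ W (k+1) ∧ ∀ w ∈ W (k+1),
      S (u + ((1/2:ℝ))^k • y) ≤ S (u + ((1/2:ℝ))^k • w) + ε/4 * (1/4)^k := by
    intro k u
    set T := (fun w => S (u + ((1/2:ℝ))^k • w)) '' W (k+1) with hT
    have hTne : T.Nonempty := ⟨_, ⟨z (k+1), hWz (k+1) (k+1) le_rfl, rfl⟩⟩
    have hTbb : BddBelow T := by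
      refine ⟨-(‖f₀‖ * (‖u‖ + R)), ?_⟩
      rintro t ⟨w, hw, rfl⟩
      exact hSlb u k w hw
    obtain ⟨t, ⟨y, hyW, rfl⟩, hlt⟩ :=
      Real.lt_sInf_add_pos hTne (show (0:ℝ) < ε/4*(1/4)^k by positivity)
    refine ⟨y, hyW, fun w hw => ?_⟩
    have hle : sInf T ≤ S (u + ((1/2:ℝ))^k • w) := csInf_le hTbb ⟨w, hw, rfl⟩
    linarith
  -- the recursively constructed sequences
  set G : ℕ → X → X := fun k v => ((1/2:ℝ))^(k+1) • Classical.choose (sel k v) with hG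
  set u : ℕ → X := simonsSeq G with hu
  set Y : ℕ → X := fun k => Classical.choose (sel k (u k)) with hY
  have hu0 : u 0 = 0 := by rw [hu, simonsSeq_zero]
  have huS : ∀ k, u (k+1) = u k + ((1/2:ℝ))^(k+1) • Y k := by
    intro k
    have h1 : u (k+1) = u k + G k (u k) := by
      rw [hu]; exact simonsSeq_succ G k
    rw [h1, hG, hY]
  have hYspec : ∀ k, Y k ∈ W (k+1) ∧ ∀ w ∈ W (k+1),
      S (u k + ((1/2:ℝ))^k • Y k) ≤ S (u k + ((1/2:ℝ))^k • w) + ε/4*(1/4)^k := by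
    intro k
    rw [hY]
    exact Classical.choose_spec (sel k (u k))
  have hYR : ∀ k, ‖Y k‖ ≤ R := fun k => hWR (k+1) _ (hYspec k).1
  have hsum : ∀ k : ℕ, Summable fun i => ((1/2:ℝ))^(i+1) • Y (k+i) := by
    intro k
    apply Summable.of_norm
    have hle : ∀ i : ℕ, ‖((1/2:ℝ))^(i+1) • Y (k+i)‖ ≤ ((1/2:ℝ))^(i+1) * R := by
      intro i
      rw [norm_smul, Real.norm_eq_abs, abs_of_nonneg (by positivity)]
      exact mul_le_mul_of_nonneg_left (hYR _) (by positivity)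
    apply Summable.of_nonneg_of_le (fun i => norm_nonneg _) hle
    have hg : Summable fun i : ℕ => ((1/2:ℝ))^(i+1) := by
      have h := (summable_geometric_of_lt_one (r := (1/2:ℝ)) (by norm_num) (by norm_num)).mul_left
        (1/2:ℝ)
      exact h.congr fun i => (pow_succ' _ _).symm
    exact hg.mul_right R
  set w : ℕ → X := fun k => ∑' i, ((1/2:ℝ))^(i+1) • Y (k+i) with hw
  have hwW : ∀ k, w k ∈ W (k+1) := by
    intro k
    simp only [hw]
    exact sigma_mem (hWconv (k+1)) (hWcl (k+1))
      (fun i => hWmono (k+1) (k+i+1) (by omega) (hYspec (k+i)).1) (hsum k)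
  have hwsplit : ∀ k, w k = (1/2:ℝ) • Y k + (1/2:ℝ) • w (k+1) := by
    intro k
    have h0 : w k = ((1/2:ℝ))^(0+1) • Y (k+0) + ∑' i, ((1/2:ℝ))^(i+1+1) • Y (k+(i+1)) := by
      rw [hw]
      exact Summable.tsum_eq_zero_add (hsum k)
    have h1 : (fun i : ℕ => ((1/2:ℝ))^(i+1+1) • Y (k+(i+1))) =
        fun i : ℕ => (1/2:ℝ) • (((1/2:ℝ))^(i+1) • Y ((k+1)+i)) := by
      funext i
      rw [show k+(i+1) = (k+1)+i from by omega, smul_smul, ← pow_succ']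
    have h2 : ∑' i, ((1/2:ℝ))^(i+1+1) • Y (k+(i+1)) = (1/2:ℝ) • w (k+1) := by
      rw [h1, hw]
      exact ((hsum (k+1)).hasSum.const_smul _).tsum_eq
    rw [h0, h2]
    simp
  have hdecomp : ∀ k, u k + ((1/2:ℝ))^k • w k = w 0 := by
    intro k
    induction k with
    | zero => simp [hu0]
    | succ k ih =>
      rw [huS k, ← ih, hwsplit k, smul_add, smul_smul, smul_smul, ← pow_succ]
      abel
  obtain ⟨b, hbB, hbw⟩ := hBbd (w 0)
  have hbK : b ∈ K := hBK hbB
  have hbw' : b (w 0) = S (w 0) := by rw [hSdef]; exact hbw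
  have hη : ∀ k : ℕ, ((1/2:ℝ))^k * (ε/4 * (1/2)^k) = ε/4 * (1/4)^k := by
    intro k
    rw [show ((1/4:ℝ))^k = (1/2:ℝ)^k*(1/2:ℝ)^k by rw [← mul_pow]; norm_num]
    ring
  have chain : ∀ k, S (w 0) - ε/2 * (1 - (1/2)^k) ≤ b (w k) := by
    intro k
    induction k with
    | zero =>
      simp only [pow_zero, sub_self, mul_zero, sub_zero]
      exact hbw'.ge
    | succ k ih =>
      have h1 : S (u k + ((1/2:ℝ))^k • Y k) ≤ S (w 0) + ε/4 * (1/4)^k := by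
        have h := (hYspec k).2 (w k) (hwW k)
        rwa [hdecomp k] at h
      have h2 : b (u k) + ((1/2:ℝ))^k * b (Y k) ≤ S (u k + ((1/2:ℝ))^k • Y k) := by
        have h := hSle b hbK (u k + ((1/2:ℝ))^k • Y k)
        rwa [map_add, map_smul, smul_eq_mul] at h
      have h3 : b (u k) + ((1/2:ℝ))^k * b (w k) = S (w 0) := by
        have h := congrArg b (hdecomp k)
        rwa [map_add, map_smul, smul_eq_mul, hbw'] at h
      have hp : (0:ℝ) < ((1/2:ℝ))^k := by positivity
      have h5 : ((1/2:ℝ))^k * (b (Y k) - b (w k)) ≤ ((1/2:ℝ))^k * (ε/4 * (1/2)^k) := by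
        have hh := hη k
        linarith [h1, h2, h3]
      have h4 : b (Y k) - b (w k) ≤ ε/4 * (1/2)^k := le_of_mul_le_mul_left h5 hp
      have h6 : b (w (k+1)) = 2 * b (w k) - b (Y k) := by
        have h := congrArg b (hwsplit k)
        rw [map_add, map_smul, map_smul, smul_eq_mul, smul_eq_mul] at h
        linarith
      have h7 : ((1/2:ℝ))^(k+1) = (1/2:ℝ)^k * (1/2) := pow_succ _ _
      have h8 : b (w k) - ε/4*(1/2)^k ≤ b (w (k+1)) := by linarith [h4, h6]
      rw [h7]
      linarith [ih, h8]
  refine ⟨b, hbB, fun N => ?_⟩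
  by_contra hcon
  push_neg at hcon
  have hhalf : W (N+1) ⊆ {v : X | b v ≤ c - ε} := by
    simp only [hWdef]
    apply closure_minimal
    · apply convexHull_min
      · rintro _ ⟨j, hj, rfl⟩
        exact hcon j (le_trans (Nat.le_succ N) hj)
      · exact convex_halfSpace_le ⟨map_add b, map_smul b⟩ (c - ε)
    · exact isClosed_le b.continuous continuous_const
  have h8 : b (w N) ≤ c - ε := hhalf (hwW N)
  have h9 : S (w 0) - ε/2 ≤ b (w N) := by
    have h := chain N
    have hp : (0:ℝ) ≤ ε/2 * (1/2)^N := by positivity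
    linarith [h, hp]
  have h10 : c ≤ S (w 0) := by
    rw [hSdef]
    apply hc
    have hw0 : (w 0) ∈ W 0 := hWmono 0 1 (by omega) (hwW 0)
    have hrange : z '' Set.Ici 0 = Set.range z := by
      ext v
      simp [Set.mem_image, Set.mem_Ici]
    simp only [hWdef] at hw0
    rwa [hrange] at hw0
  linarith

end SimonsAux

/-- Simons' equality: if `B` is a boundary for the weak*-compact convex set
`K ⊆ X*`, then for every bounded sequence `(x_n)` in `X`,
`sup_{f ∈ K} limsup f(x_n) = sup_{f ∈ B} limsup f(x_n)`. -/
theorem simons_equality {X : Type*} [NormedAddCommGroup X] [NormedSpace ℝ X]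
    [CompleteSpace X]
    (K : Set (StrongDual ℝ X)) (hKcomp : IsCompact (⇑StrongDual.toWeakDual '' K))
    (hKconv : Convex ℝ K)
    (B : Set (StrongDual ℝ X)) (hBK : B ⊆ K)
    (hBbd : ∀ y : X, ∃ b ∈ B, b y = ⨆ f : K, (f : StrongDual ℝ X) y)
    (x : ℕ → X) (R : ℝ) (hR : ∀ n, ‖x n‖ ≤ R) :
    (⨆ f : K, limsup (fun n => (f : StrongDual ℝ X) (x n)) atTop) =
      ⨆ f : B, limsup (fun n => (f : StrongDual ℝ X) (x n)) atTop := by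
  classical
  obtain ⟨b₀, hb₀B, -⟩ := hBbd 0
  have hKne : K.Nonempty := ⟨b₀, hBK hb₀B⟩
  have hBne : B.Nonempty := ⟨b₀, hb₀B⟩
  have hR0 : (0:ℝ) ≤ R := le_trans (norm_nonneg (x 0)) (hR 0)
  have hev : ∀ y : X, IsCompact ((fun f : StrongDual ℝ X => f y) '' K) := by
    intro y
    have h1 : Continuous fun f : WeakDual ℝ X => f y := WeakDual.eval_continuous y
    have h2 := hKcomp.image h1
    have h3 : (fun f : WeakDual ℝ X => f y) '' (⇑StrongDual.toWeakDual '' K) =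
        (fun f : StrongDual ℝ X => f y) '' K := by
      rw [Set.image_image]
      rfl
    rwa [h3] at h2
  have hbdd : ∀ y : X, BddAbove (Set.range fun f : K => (f : StrongDual ℝ X) y) := by
    intro y
    have h := (hev y).bddAbove
    rwa [Set.image_eq_range] at h
  have hpt : ∀ y : X, ∃ C, ∀ f : K, ‖(f : StrongDual ℝ X) y‖ ≤ C := by
    intro y
    obtain ⟨A, hA⟩ := (hev y).bddAbove
    obtain ⟨A', hA'⟩ := (hev y).bddBelow
    refine ⟨max A (-A'), fun f => ?_⟩
    have h1 : (f : StrongDual ℝ X) y ≤ A := hA ⟨f.1, f.2, rfl⟩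
    have h2 : A' ≤ (f : StrongDual ℝ X) y := hA' ⟨f.1, f.2, rfl⟩
    rw [Real.norm_eq_abs, abs_le]
    constructor
    · have := le_max_right A (-A')
      linarith
    · exact le_trans h1 (le_max_left A (-A'))
  obtain ⟨C, hC⟩ := banach_steinhaus hpt
  have hval : ∀ (f : StrongDual ℝ X), f ∈ K → ∀ n, |f (x n)| ≤ C * R := by
    intro f hf n
    rw [← Real.norm_eq_abs]
    calc ‖f (x n)‖ ≤ ‖f‖ * ‖x n‖ := f.le_opNorm _
      _ ≤ C * R := mul_le_mul (hC ⟨f, hf⟩) (hR n) (norm_nonneg _)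
          (le_trans (norm_nonneg f) (hC ⟨f, hf⟩))
  have hlimsup_le : ∀ (f : StrongDual ℝ X), f ∈ K → limsup (fun n => f (x n)) atTop ≤ C * R := by
    intro f hf
    have hcob : IsCoboundedUnder (· ≤ ·) atTop (fun n => f (x n)) := by
      apply IsBoundedUnder.isCoboundedUnder_le
      exact isBoundedUnder_of ⟨-(C*R), fun n => by
        have := (abs_le.mp (hval f hf n)).1
        simpa using this⟩
    exact limsup_le_of_le hcob (Eventually.of_forall fun n => (abs_le.mp (hval f hf n)).2)
  have hbddK : BddAbove (Set.range fun f : K =>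
      limsup (fun n => (f : StrongDual ℝ X) (x n)) atTop) := by
    refine ⟨C*R, ?_⟩
    rintro t ⟨f, rfl⟩
    exact hlimsup_le f f.2
  have hbddB : BddAbove (Set.range fun f : B =>
      limsup (fun n => (f : StrongDual ℝ X) (x n)) atTop) := by
    refine ⟨C*R, ?_⟩
    rintro t ⟨f, rfl⟩
    exact hlimsup_le f (hBK f.2)
  have hBle : (⨆ f : B, limsup (fun n => (f : StrongDual ℝ X) (x n)) atTop) ≤
      ⨆ f : K, limsup (fun n => (f : StrongDual ℝ X) (x n)) atTop := by
    have : Nonempty B := hBne.to_subtype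
    apply ciSup_le
    intro f
    exact le_ciSup hbddK (⟨f.1, hBK f.2⟩ : K)
  refine le_antisymm ?_ hBle
  have : Nonempty K := hKne.to_subtype
  apply ciSup_le
  rintro ⟨f, hf⟩
  apply le_of_forall_sub_le
  intro ε hε
  set L := limsup (fun n => (f : StrongDual ℝ X) (x n)) atTop with hL
  have hcob : IsCoboundedUnder (· ≤ ·) atTop (fun n => f (x n)) := by
    apply IsBoundedUnder.isCoboundedUnder_le
    exact isBoundedUnder_of ⟨-(C*R), fun n => by
      have := (abs_le.mp (hval f hf n)).1
      simpa using this⟩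
  have hfreq : ∃ᶠ n in atTop, L - ε/2 < f (x n) := by
    apply frequently_lt_of_lt_limsup hcob
    rw [← hL]
    exact sub_lt_self L (by positivity)
  obtain ⟨φ, hφmono, hφ⟩ := extraction_of_frequently_atTop hfreq
  have hc : ∀ y ∈ closure (convexHull ℝ (Set.range (fun k => x (φ k)))),
      L - ε/2 ≤ ⨆ g : K, (g : StrongDual ℝ X) y := by
    intro y hy
    have hsub : closure (convexHull ℝ (Set.range fun k => x (φ k))) ⊆
        {v : X | L - ε/2 ≤ f v} := by
      apply closure_minimal
      · apply convexHull_min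
        · rintro _ ⟨k, rfl⟩
          exact (hφ k).le
        · exact convex_halfSpace_ge ⟨map_add f, map_smul f⟩ (L - ε/2)
      · exact isClosed_le continuous_const f.continuous
    calc L - ε/2 ≤ f y := hsub hy
      _ ≤ ⨆ g : K, (g : StrongDual ℝ X) y := le_ciSup (hbdd y) (⟨f, hf⟩ : K)
  obtain ⟨b, hbB, hb⟩ := simons_core K B hBK f hf hbdd hBbd (fun k => x (φ k)) R
    (fun k => hR _) (L - ε/2) hc (ε/2) (by positivity)
  have hfreq2 : ∃ᶠ n in atTop, L - ε ≤ b (x n) := by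
    rw [frequently_atTop]
    intro N
    obtain ⟨j, hjN, hj⟩ := hb N
    refine ⟨φ j, le_trans hjN hφmono.le_apply, by linarith⟩
  have hbnd : IsBoundedUnder (· ≤ ·) atTop (fun n => b (x n)) :=
    isBoundedUnder_of ⟨C*R, fun n => (abs_le.mp (hval b (hBK hbB) n)).2⟩
  calc L - ε ≤ limsup (fun n => b (x n)) atTop := le_limsup_of_frequently_le hfreq2 hbnd
    _ ≤ ⨆ g : B, limsup (fun n => (g : StrongDual ℝ X) (x n)) atTop :=
        le_ciSup hbddB (⟨b, hbB⟩ : B)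
end
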